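/- Let (q_k)_{k≥0} be a decreasing sequence of projections in a von Neumann algebra with normalized trace τ, with q_0 = e a projection, and suppose (f_k)_{k≥0} is an increasing sequence of positive operators with sup_k τ(f_k) = M < ∞ such that for each k: q_k commutes with q_{k−1} f_k q_{k−1}, and (q_{k−1} − q_k)f_k(q_{k−1} − q_k) ≥ λ²(q_{k−1} − q_k) whenever q_k ≠ q_{k−1} (Cuculescu property). Then with q = ⋀_k q_k, τ(e − q) ≤ M/λ². -/

import Mathlib

open scoped ComplexOrder Matrix

/-- The normalized trace `τ` on `n × n` complex matrices. -/
noncomputable def ntr {n : ℕ} (A : Matrix (Fin n) (Fin n) ℂ) : ℝ := A.trace.re / n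

/-- A projection: a Hermitian idempotent matrix. -/
def IsProj {n : ℕ} (P : Matrix (Fin n) (Fin n) ℂ) : Prop :=
  P.IsHermitian ∧ P * P = P

namespace CucuAux

open Matrix

variable {n : ℕ}

lemma ext_mulVec {A B : Matrix (Fin n) (Fin n) ℂ} (h : ∀ x, A *ᵥ x = B *ᵥ x) : A = B := by
  ext i j
  have := congrFun (h (Pi.single j 1)) i
  simpa using this

lemma psd_antisymm {A : Matrix (Fin n) (Fin n) ℂ} (h1 : A.PosSemidef)
    (h2 : (-A).PosSemidef) : A = 0 := by
  apply ext_mulVec (B := 0)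
  intro x
  rw [Matrix.zero_mulVec, ← h1.dotProduct_mulVec_zero_iff]
  have a := h1.dotProduct_mulVec_nonneg x
  have b := h2.dotProduct_mulVec_nonneg x
  rw [Matrix.neg_mulVec, dotProduct_neg] at b
  exact le_antisymm (by simpa using b) a

lemma proj_psd {p : Matrix (Fin n) (Fin n) ℂ} (hp : IsProj p) : p.PosSemidef := by
  have : p = pᴴ * p := by rw [hp.1, hp.2]
  rw [this]
  exact posSemidef_conjTranspose_mul_self p

lemma proj_one_sub {p : Matrix (Fin n) (Fin n) ℂ} (hp : IsProj p) : IsProj (1 - p) := by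
  constructor
  · simpa [Matrix.IsHermitian] using hp.1
  · have := hp.2
    noncomm_ring [this]

/-- For projections with `q ≤ p`, we have `p * q = q` and `q * p = q`. -/
lemma proj_le {p q : Matrix (Fin n) (Fin n) ℂ} (hp : IsProj p) (hq : IsProj q)
    (hle : (p - q).PosSemidef) : p * q = q ∧ q * p = q := by
  have hX : (q * (p - q) * q).PosSemidef := by
    have := hle.mul_mul_conjTranspose_same q
    rwa [hq.1] at this
  have hXeq : q * (p - q) * q = q * p * q - q := by
    have := hq.2
    noncomm_ring [this]
  have hY : ((1 - p) * q)ᴴ * ((1 - p) * q) = q - q * p * q := by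
    have h3 := hq.1
    have h4 := hq.2
    have h5 := (proj_one_sub hp).2
    calc ((1 - p) * q)ᴴ * ((1 - p) * q) = (q * (1 - p)) * ((1 - p) * q) := by
          rw [conjTranspose_mul, (proj_one_sub hp).1, h3]
      _ = q * ((1 - p) * (1 - p)) * q := by noncomm_ring
      _ = q * (1 - p) * q := by rw [h5]
      _ = q * q - q * p * q := by noncomm_ring
      _ = q - q * p * q := by rw [h4]
  have hzero : ((1 - p) * q)ᴴ * ((1 - p) * q) = 0 := by
    rw [hY]
    apply psd_antisymm
    · have := posSemidef_conjTranspose_mul_self ((1 - p) * q)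
      rwa [hY] at this
    · have : -(q - q * p * q) = q * (p - q) * q := by rw [hXeq, neg_sub]
      rw [this]
      exact hX
  have h5 : (1 - p) * q = 0 := by
    rwa [conjTranspose_mul_self_eq_zero] at hzero
  have h6 : p * q = q := by
    have : (1 - p) * q = q - p * q := by noncomm_ring
    rw [this] at h5
    linear_combination (norm := noncomm_ring) -h5
  refine ⟨h6, ?_⟩
  have := congrArg conjTranspose h6
  rwa [conjTranspose_mul, hp.1, hq.1] at this

lemma psd_chain {g : ℕ → Matrix (Fin n) (Fin n) ℂ}
    (h : ∀ k, (g k - g (k + 1)).PosSemidef) :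
    ∀ j k, j ≤ k → (g j - g k).PosSemidef := by
  intro j k hjk
  induction k, hjk using Nat.le_induction with
  | base => simpa using Matrix.PosSemidef.zero
  | succ m hm ih =>
    have : g j - g (m + 1) = (g j - g m) + (g m - g (m + 1)) := by abel
    rw [this]
    exact ih.add (h m)

lemma ntr_nonneg {A : Matrix (Fin n) (Fin n) ℂ} (hA : A.PosSemidef) : 0 ≤ ntr A := by
  have h : ∀ i, 0 ≤ (A i i).re := by
    intro i
    have h1 := hA.dotProduct_mulVec_nonneg (Pi.single i 1)
    have h2 : star (Pi.single i 1 : Fin n → ℂ) ⬝ᵥ A *ᵥ Pi.single i 1 = A i i := by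
      simp [dotProduct, Pi.single_apply, Finset.sum_ite_eq', apply_ite]
    rw [h2] at h1
    exact (Complex.le_def.mp h1).1
  have : 0 ≤ A.trace.re := by
    rw [Matrix.trace, Complex.re_sum]
    exact Finset.sum_nonneg fun i _ => h i
  exact div_nonneg this (Nat.cast_nonneg n)

lemma ntr_add (A B : Matrix (Fin n) (Fin n) ℂ) : ntr (A + B) = ntr A + ntr B := by
  simp [ntr, Matrix.trace_add, Complex.add_re, add_div]

lemma ntr_sub (A B : Matrix (Fin n) (Fin n) ℂ) : ntr (A - B) = ntr A - ntr B := by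
  simp [ntr, Matrix.trace_sub, Complex.sub_re, sub_div]

lemma ntr_mono {A B : Matrix (Fin n) (Fin n) ℂ} (h : (B - A).PosSemidef) : ntr A ≤ ntr B := by
  have := ntr_nonneg h
  rw [ntr_sub] at this
  linarith

lemma ntr_smul (r : ℝ) (A : Matrix (Fin n) (Fin n) ℂ) : ntr (r • A) = r * ntr A := by
  simp [ntr, Matrix.trace_smul, Complex.real_smul, mul_div_assoc]

lemma ntr_sum {α : Type*} (s : Finset α) (A : α → Matrix (Fin n) (Fin n) ℂ) :
    ntr (∑ i ∈ s, A i) = ∑ i ∈ s, ntr (A i) := by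
  simp [ntr, Matrix.trace_sum, Complex.re_sum, Finset.sum_div]

lemma ntr_proj_mul_proj (F p : Matrix (Fin n) (Fin n) ℂ) (hp : p * p = p) :
    ntr (p * F * p) = ntr (F * p) := by
  unfold ntr
  rw [mul_assoc, trace_mul_comm p (F * p), mul_assoc, hp]

lemma ntr_mul_proj_nonneg {F p : Matrix (Fin n) (Fin n) ℂ} (hF : F.PosSemidef)
    (hp : IsProj p) : 0 ≤ ntr (F * p) := by
  have h1 : (p * F * p).PosSemidef := by
    have := hF.conjTranspose_mul_mul_same p
    rwa [hp.1] at this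
  rw [← ntr_proj_mul_proj F p hp.2]
  exact ntr_nonneg h1

end CucuAux

/-- Weak-type (1,1) trace estimate for Cuculescu projections: if `(q_k)` is a
decreasing sequence of projections with `q_0 = e`, `(f_k)` an increasing sequence
of positive operators with `sup_k τ(f_k) = M`, such that `q_k` commutes with
`q_{k−1} f_k q_{k−1}` and `(q_{k−1} − q_k) f_k (q_{k−1} − q_k) ≥ λ²(q_{k−1} − q_k)`
whenever `q_k ≠ q_{k−1}`, then with `q = ⋀_k q_k` one has `τ(e − q) ≤ M/λ²`. -/
theorem cuculescu_trace_estimate {n : ℕ} (hn : 0 < n) {l M : ℝ} (hl : 0 < l)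
    (e : Matrix (Fin n) (Fin n) ℂ) (he : IsProj e)
    (q : ℕ → Matrix (Fin n) (Fin n) ℂ) (hq : ∀ k, IsProj (q k))
    (hq0 : q 0 = e) (hdec : ∀ k, (q k - q (k + 1)).PosSemidef)
    (f : ℕ → Matrix (Fin n) (Fin n) ℂ) (hfpos : ∀ k, (f k).PosSemidef)
    (hfmono : ∀ k, (f (k + 1) - f k).PosSemidef)
    (hbdd : BddAbove (Set.range fun k => ntr (f k)))
    (hM : (⨆ k, ntr (f k)) = M)
    (hcomm : ∀ k ≥ 1, Commute (q k) (q (k - 1) * f k * q (k - 1)))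
    (hcuc : ∀ k ≥ 1, q k ≠ q (k - 1) →
      ((q (k - 1) - q k) * f k * (q (k - 1) - q k) - l ^ 2 • (q (k - 1) - q k)).PosSemidef)
    (Q : Matrix (Fin n) (Fin n) ℂ) (hQ : IsProj Q)
    (hQle : ∀ k, (q k - Q).PosSemidef)
    (hQmax : ∀ R, IsProj R → (∀ k, (q k - R).PosSemidef) → (Q - R).PosSemidef) :
    ntr (e - Q) ≤ M / l ^ 2 := by
  classical
  have hle : ∀ j k, j ≤ k → (q j - q k).PosSemidef := CucuAux.psd_chain hdec
  have hfle : ∀ j k, j ≤ k → (f k - f j).PosSemidef := by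
    intro j k h
    have := CucuAux.psd_chain (g := fun k => -f k)
      (fun k => by simp only [neg_sub_neg]; exact hfmono k) j k h
    simp only [neg_sub_neg] at this
    exact this
  have hmul : ∀ j k, j ≤ k → q j * q k = q k ∧ q k * q j = q k := fun j k h =>
    CucuAux.proj_le (hq j) (hq k) (hle j k h)
  have hprojp : ∀ k, IsProj (q k - q (k + 1)) := by
    intro k
    refine ⟨(hq k).1.sub (hq (k + 1)).1, ?_⟩
    have h1 := (hmul k (k + 1) (by omega)).1
    have h2 := (hmul k (k + 1) (by omega)).2
    have h3 := (hq k).2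
    have h4 := (hq (k + 1)).2
    calc (q k - q (k + 1)) * (q k - q (k + 1))
        = q k * q k - q k * q (k + 1) - q (k + 1) * q k + q (k + 1) * q (k + 1) := by
          noncomm_ring
      _ = q k - q (k + 1) := by rw [h1, h2, h3, h4]; abel
  -- the key estimate for each N
  have key : ∀ N, l ^ 2 * ntr (e - q N) ≤ M := by
    intro N
    have step1 : ∀ k, l ^ 2 * ntr (q k - q (k + 1)) ≤
        ntr ((q k - q (k + 1)) * f (k + 1) * (q k - q (k + 1))) := by
      intro k
      by_cases hkeq : q (k + 1) = q k
      · simp [hkeq, ntr]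
      · have h := hcuc (k + 1) (by omega) (by simpa using hkeq)
        simp only [Nat.add_sub_cancel] at h
        have h2 := CucuAux.ntr_nonneg h
        rw [CucuAux.ntr_sub, CucuAux.ntr_smul] at h2
        linarith
    have step2 : ∀ k, k < N →
        ntr ((q k - q (k + 1)) * f (k + 1) * (q k - q (k + 1))) ≤
          ntr (f N * (q k - q (k + 1))) := by
      intro k hk
      have hd : (f N - f (k + 1)).PosSemidef := hfle (k + 1) N hk
      have hc : ((q k - q (k + 1)) * (f N - f (k + 1)) * (q k - q (k + 1))).PosSemidef := by
        have := hd.mul_mul_conjTranspose_same (q k - q (k + 1))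
        rwa [(hprojp k).1] at this
      have heq : (q k - q (k + 1)) * (f N - f (k + 1)) * (q k - q (k + 1))
          = (q k - q (k + 1)) * f N * (q k - q (k + 1)) -
            (q k - q (k + 1)) * f (k + 1) * (q k - q (k + 1)) := by
        noncomm_ring
      rw [heq] at hc
      calc ntr ((q k - q (k + 1)) * f (k + 1) * (q k - q (k + 1)))
          ≤ ntr ((q k - q (k + 1)) * f N * (q k - q (k + 1))) := CucuAux.ntr_mono hc
        _ = ntr (f N * (q k - q (k + 1))) := CucuAux.ntr_proj_mul_proj _ _ (hprojp k).2
    have tele : ∑ k ∈ Finset.range N, (q k - q (k + 1)) = q 0 - q N :=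
      Finset.sum_range_sub' q N
    have main : l ^ 2 * ntr (q 0 - q N) ≤ ntr (f N * (q 0 - q N)) := by
      calc l ^ 2 * ntr (q 0 - q N)
          = ∑ k ∈ Finset.range N, l ^ 2 * ntr (q k - q (k + 1)) := by
            rw [← Finset.mul_sum, ← CucuAux.ntr_sum, tele]
        _ ≤ ∑ k ∈ Finset.range N, ntr (f N * (q k - q (k + 1))) := by
            refine Finset.sum_le_sum fun k hk => ?_
            exact le_trans (step1 k) (step2 k (Finset.mem_range.mp hk))
        _ = ntr (f N * (q 0 - q N)) := by
            rw [← CucuAux.ntr_sum, ← Finset.mul_sum, tele]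
    have bound : ntr (f N * (q 0 - q N)) ≤ ntr (f N) := by
      have h1 : 0 ≤ ntr (f N * (1 - q 0)) := by
        refine CucuAux.ntr_mul_proj_nonneg (hfpos N) ?_
        rw [hq0]; exact CucuAux.proj_one_sub he
      have h2 : 0 ≤ ntr (f N * q N) := CucuAux.ntr_mul_proj_nonneg (hfpos N) (hq N)
      have h3 : f N = f N * (q 0 - q N) + f N * (1 - q 0) + f N * q N := by noncomm_ring
      have h4 : ntr (f N) = ntr (f N * (q 0 - q N)) + ntr (f N * (1 - q 0)) +
          ntr (f N * q N) := by
        rw [← CucuAux.ntr_add, ← CucuAux.ntr_add, ← h3]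
      linarith
    have fbound : ntr (f N) ≤ M := hM ▸ le_ciSup hbdd N
    rw [← hq0]
    linarith
  -- stabilization of the sequence of projections
  obtain ⟨K, hK⟩ : ∃ K, ∀ N, K ≤ N → q N = q K := by
    set W : ℕ → Submodule ℂ (Fin n → ℂ) := fun k => LinearMap.range (q k).mulVecLin with hW
    have hWmono : ∀ j k, j ≤ k → W k ≤ W j := by
      intro j k hjk
      have h1 : q j * q k = q k := (hmul j k hjk).1
      have h2 : W k = LinearMap.range ((q j).mulVecLin ∘ₗ (q k).mulVecLin) := by
        rw [← Matrix.mulVecLin_mul, h1]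
      rw [h2]
      exact LinearMap.range_comp_le_range _ _
    set r : ℕ → ℕ := fun k => Module.finrank ℂ (W k) with hr
    have hne : (Set.range r).Nonempty := ⟨r 0, 0, rfl⟩
    obtain ⟨K, hKr⟩ := Nat.sInf_mem hne
    refine ⟨K, fun N hN => ?_⟩
    have hWeq : W N = W K := by
      apply Submodule.eq_of_le_of_finrank_le (hWmono K N hN)
      show r K ≤ r N
      rw [hKr]
      exact Nat.sInf_le ⟨N, rfl⟩
    have h1 : q N * q K = q K := by
      apply CucuAux.ext_mulVec
      intro x
      have hmem : q K *ᵥ x ∈ W N := by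
        rw [hWeq]
        exact ⟨x, rfl⟩
      obtain ⟨y, hy⟩ := hmem
      simp only [Matrix.mulVecLin_apply] at hy
      rw [← Matrix.mulVec_mulVec, ← hy, Matrix.mulVec_mulVec, (hq N).2]
    rw [← h1, (hmul K N hN).2]
  -- Q equals q K
  have hforall : ∀ k, (q k - q K).PosSemidef := by
    intro k
    rcases le_total k K with h | h
    · exact hle k K h
    · rw [hK k h]
      simpa using Matrix.PosSemidef.zero
  have h2 := hQmax (q K) (hq K) hforall
  have h3 := hQle K
  have h4 : q K - Q = 0 := CucuAux.psd_antisymm h3 (by rwa [neg_sub])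
  have hQK : Q = q K := by
    have := sub_eq_zero.mp h4
    exact this.symm
  rw [hQK, le_div_iff₀ (pow_pos hl 2)]
  have := key K
  linarith [key K, mul_comm (l ^ 2) (ntr (e - q K))]
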